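/- Let μ₁, μ₂ ∈ ℝ, σ > 0, and c ≥ 0, and set s = √(μ₁² + μ₂²). If X and Y are independent real random variables with X distributed as gaussianReal μ₁ (σ²/2) and Y distributed as gaussianReal μ₂ (σ²/2), then P(X² + Y² ≤ c) = ∫₀^{√c} (2r/σ²) · e^{−(r² + s²)/σ²} · ( (1/(2π)) ∫₀^{2π} e^{(2 r s/σ²) cos φ} dφ ) dr. -/

import Mathlib

open MeasureTheory ProbabilityTheory Real Set
open scoped ENNReal NNReal

lemma angular_aux (a b : ℝ) :
    ∫ φ in (-π)..π, Real.exp (a * Real.cos φ + b * Real.sin φ)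
      = ∫ φ in (0:ℝ)..(2*π), Real.exp (Real.sqrt (a^2+b^2) * Real.cos φ) := by
  by_cases h0 : a = 0 ∧ b = 0
  · obtain ⟨rfl, rfl⟩ := h0
    simp [intervalIntegral.integral_const]
    ring
  · set A := Real.sqrt (a^2+b^2) with hA
    have hz : (⟨a, b⟩ : ℂ) ≠ 0 := by
      simp only [ne_eq, Complex.ext_iff, Complex.zero_re, Complex.zero_im]
      tauto
    have habs : ‖(⟨a, b⟩ : ℂ)‖ = A := by
      rw [Complex.norm_def, Complex.normSq_mk, hA]
      ring_nf
    set θ := Complex.arg ⟨a, b⟩ with hθ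
    have hApos : 0 < A := by rw [← habs]; exact norm_pos_iff.mpr hz
    have hcos : Real.cos θ = a / A := by rw [hθ, Complex.cos_arg hz, habs]
    have hsin : Real.sin θ = b / A := by rw [hθ, Complex.sin_arg, habs]
    have key : ∀ φ : ℝ, a * Real.cos φ + b * Real.sin φ = A * Real.cos (φ - θ) := by
      intro φ
      rw [Real.cos_sub, hcos, hsin]
      field_simp
    simp_rw [key]
    rw [intervalIntegral.integral_comp_sub_right (fun x => Real.exp (A * Real.cos x)) θ]
    have hper : Function.Periodic (fun x => Real.exp (A * Real.cos x)) (2*π) := by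
      intro x; simp [Real.cos_periodic x]
    have h2 := hper.intervalIntegral_add_eq (-π - θ) 0
    rw [zero_add] at h2
    rw [show π - θ = -π - θ + 2*π by ring, h2]

lemma gauss_prod_aux (μ₁ μ₂ : ℝ) (v : ℝ≥0) (hv : v ≠ 0) :
    (gaussianReal μ₁ v).prod (gaussianReal μ₂ v)
      = (volume : Measure (ℝ × ℝ)).withDensity
          (fun p => gaussianPDF μ₁ v p.1 * gaussianPDF μ₂ v p.2) := by
  refine Measure.prod_eq fun s t hs ht => ?_
  rw [withDensity_apply _ (hs.prod ht), Measure.volume_eq_prod, ← Measure.prod_restrict,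
    lintegral_prod_mul (measurable_gaussianPDF μ₁ v).aemeasurable
      (measurable_gaussianPDF μ₂ v).aemeasurable,
    gaussianReal_apply _ hv _, gaussianReal_apply _ hv _]

lemma polar_integrable_aux (F : ℝ × ℝ → ℝ) (hF : Integrable F volume) :
    IntegrableOn (fun p : ℝ × ℝ => p.1 • F (polarCoord.symm p)) polarCoord.target volume := by
  set B : ℝ × ℝ → ℝ × ℝ →L[ℝ] ℝ × ℝ := fun p =>
    LinearMap.toContinuousLinearMap (Matrix.toLin (Module.Basis.finTwoProd ℝ) (Module.Basis.finTwoProd ℝ)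
      !![cos p.2, -p.1 * sin p.2; sin p.2, p.1 * cos p.2]) with hB
  have A : ∀ p ∈ polarCoord.target, HasFDerivWithinAt polarCoord.symm (B p) polarCoord.target p :=
    fun p _ => (hasFDerivAt_polarCoord_symm p).hasFDerivWithinAt
  have B_det : ∀ p, (B p).det = p.1 := by
    intro p
    conv_rhs => rw [← one_mul p.1, ← cos_sq_add_sin_sq p.2]
    simp only [hB, neg_mul, LinearMap.det_toContinuousLinearMap, LinearMap.det_toLin,
      Matrix.det_fin_two_of, sub_neg_eq_add]
    ring
  have hinj : InjOn polarCoord.symm polarCoord.target := by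
    have := polarCoord.symm.injOn
    rwa [OpenPartialHomeomorph.symm_source] at this
  have himg : polarCoord.symm '' polarCoord.target = polarCoord.source :=
    polarCoord.symm_image_target_eq_source
  have h1 : IntegrableOn F polarCoord.source volume := hF.integrableOn
  rw [← himg, integrableOn_image_iff_integrableOn_abs_det_fderiv_smul volume
    polarCoord.open_target.measurableSet A hinj F] at h1
  refine h1.congr_fun (fun p hp => ?_) polarCoord.open_target.measurableSet
  dsimp only
  rw [B_det, abs_of_pos hp.1]

/-- Theorem 2 (two degrees of freedom): for independent `X ~ gaussianReal μ₁ (σ²/2)`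
and `Y ~ gaussianReal μ₂ (σ²/2)` and `c ≥ 0`, with `s = √(μ₁² + μ₂²)`,
`P(X² + Y² ≤ c) = ∫₀^{√c} (2r/σ²) e^{−(r²+s²)/σ²} ((1/(2π)) ∫₀^{2π} e^{(2rs/σ²)cos φ} dφ) dr`
(the Rician / noncentral chi-square CDF). -/
theorem outage_probability_two_dof
    {Ω : Type*} [MeasurableSpace Ω] (P : Measure Ω) [IsProbabilityMeasure P]
    (μ₁ μ₂ σ c : ℝ) (hσ : 0 < σ) (hc : 0 ≤ c)
    (s : ℝ) (hs : s = Real.sqrt (μ₁ ^ 2 + μ₂ ^ 2))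
    (X Y : Ω → ℝ) (hmX : Measurable X) (hmY : Measurable Y)
    (hindep : IndepFun X Y P)
    (hX : P.map X = gaussianReal μ₁ (σ ^ 2 / 2).toNNReal)
    (hY : P.map Y = gaussianReal μ₂ (σ ^ 2 / 2).toNNReal) :
    (P {ω | X ω ^ 2 + Y ω ^ 2 ≤ c}).toReal
      = ∫ r in (0 : ℝ)..Real.sqrt c,
          (2 * r / σ ^ 2) * Real.exp (-(r ^ 2 + s ^ 2) / σ ^ 2)
            * ((1 / (2 * Real.pi))
                * ∫ φ in (0 : ℝ)..(2 * Real.pi),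
                    Real.exp ((2 * r * s / σ ^ 2) * Real.cos φ)) := by
  have hπ := Real.pi_pos
  set v : ℝ≥0 := (σ ^ 2 / 2).toNNReal with hvdef
  have hv : v ≠ 0 := by
    simp only [hvdef, ne_eq, Real.toNNReal_eq_zero, not_le]
    positivity
  have hvc : (v : ℝ) = σ ^ 2 / 2 := Real.coe_toNNReal _ (by positivity)
  have hs0 : 0 ≤ s := hs ▸ Real.sqrt_nonneg _
  have hsq : s ^ 2 = μ₁ ^ 2 + μ₂ ^ 2 := by rw [hs]; exact Real.sq_sqrt (by positivity)
  set g : ℝ × ℝ → ℝ := fun p => gaussianPDFReal μ₁ v p.1 * gaussianPDFReal μ₂ v p.2 with hgdef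
  set D : Set (ℝ × ℝ) := {p | p.1 ^ 2 + p.2 ^ 2 ≤ c} with hDdef
  have hD : MeasurableSet D := measurableSet_le (by fun_prop) measurable_const
  have hg_nonneg : ∀ p, 0 ≤ g p := fun p =>
    mul_nonneg (gaussianPDFReal_nonneg _ _ _) (gaussianPDFReal_nonneg _ _ _)
  have hg_int : Integrable g (volume : Measure (ℝ × ℝ)) := by
    have := (integrable_gaussianPDFReal μ₁ v).mul_prod (integrable_gaussianPDFReal μ₂ v)
    rwa [← Measure.volume_eq_prod] at this
  have hF_int : Integrable (D.indicator g) (volume : Measure (ℝ × ℝ)) := hg_int.indicator hD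
  -- Step 1: reduce to the product gaussian measure of the disk
  have h1 : P {ω | X ω ^ 2 + Y ω ^ 2 ≤ c} = ((gaussianReal μ₁ v).prod (gaussianReal μ₂ v)) D := by
    have hmap := (indepFun_iff_map_prod_eq_prod_map_map hmX.aemeasurable hmY.aemeasurable).mp hindep
    rw [← hX, ← hY, ← hmap, Measure.map_apply (hmX.prodMk hmY) hD]
    rfl
  -- Step 2: the product measure of the disk as a real integral
  have h2 : ((gaussianReal μ₁ v).prod (gaussianReal μ₂ v)) D
      = ENNReal.ofReal (∫ p in D, g p) := by
    rw [gauss_prod_aux μ₁ μ₂ v hv, withDensity_apply _ hD]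
    have e1 : ∫⁻ p in D, gaussianPDF μ₁ v p.1 * gaussianPDF μ₂ v p.2
        = ∫⁻ p in D, ENNReal.ofReal (g p) := by
      refine lintegral_congr fun p => ?_
      rw [hgdef]
      simp only [gaussianPDF]
      rw [← ENNReal.ofReal_mul (gaussianPDFReal_nonneg _ _ _)]
    rw [e1, ← ofReal_integral_eq_lintegral_ofReal hg_int.integrableOn
      (ae_of_all _ fun p => hg_nonneg p)]
  have h3 : (P {ω | X ω ^ 2 + Y ω ^ 2 ≤ c}).toReal = ∫ p in D, g p := by
    rw [h1, h2, ENNReal.toReal_ofReal (setIntegral_nonneg hD fun p _ => hg_nonneg p)]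
  rw [h3, ← integral_indicator hD, ← integral_comp_polarCoord_symm (D.indicator g)]
  -- Fubini on the polar target
  have hI := polar_integrable_aux (D.indicator g) hF_int
  rw [polarCoord_target] at hI
  rw [polarCoord_target, Measure.volume_eq_prod]
  rw [Measure.volume_eq_prod] at hI
  rw [setIntegral_prod _ hI]
  -- inner integral simplification on Ioi 0
  have h6 : ∀ r ∈ Ioi (0:ℝ),
      (∫ φ in Ioo (-π) π, (r, φ).1 • (D.indicator g) (polarCoord.symm (r, φ))) =
      (Ioc 0 (Real.sqrt c)).indicator
        (fun r => ∫ φ in Ioo (-π) π, r * g (r * Real.cos φ, r * Real.sin φ)) r := by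
    intro r hr
    rw [mem_Ioi] at hr
    have hmem : ∀ φ : ℝ, ((r * Real.cos φ, r * Real.sin φ) ∈ D) ↔ r ^ 2 ≤ c := by
      intro φ
      simp only [hDdef, mem_setOf_eq]
      rw [mul_pow, mul_pow, ← mul_add, add_comm ((Real.cos φ)^2), Real.sin_sq_add_cos_sq, mul_one]
    by_cases hrc : r ^ 2 ≤ c
    · have hrmem : r ∈ Ioc 0 (Real.sqrt c) := ⟨hr, (Real.le_sqrt hr.le hc).mpr hrc⟩
      rw [indicator_of_mem hrmem]
      refine setIntegral_congr_fun measurableSet_Ioo fun φ _ => ?_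
      rw [polarCoord_symm_apply]
      simp only
      rw [indicator_of_mem ((hmem φ).mpr hrc), smul_eq_mul]
    · have hnot : r ∉ Ioc 0 (Real.sqrt c) := fun hmem' =>
        hrc ((Real.le_sqrt hr.le hc).mp hmem'.2)
      rw [indicator_of_notMem hnot]
      have hz : ∀ φ : ℝ, (r, φ).1 • (D.indicator g) (polarCoord.symm (r, φ)) = 0 := by
        intro φ
        rw [polarCoord_symm_apply]
        simp only
        rw [indicator_of_notMem (fun h => hrc ((hmem φ).mp h)), smul_zero]
      simp_rw [hz, integral_zero]
  rw [setIntegral_congr_fun measurableSet_Ioi h6,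
    setIntegral_indicator measurableSet_Ioc,
    show Ioi (0:ℝ) ∩ Ioc 0 (Real.sqrt c) = Ioc 0 (Real.sqrt c) from
      inter_eq_self_of_subset_right Ioc_subset_Ioi_self,
    ← intervalIntegral.integral_of_le (Real.sqrt_nonneg c)]
  -- pointwise evaluation of the radial integrand
  refine intervalIntegral.integral_congr fun r hr => ?_
  have hr0 : 0 ≤ r := by
    rcases hr with ⟨h₁, _⟩
    simpa [uIcc_of_le (Real.sqrt_nonneg c)] using h₁
  set a := 2 * r * μ₁ / σ ^ 2 with hadef
  set b := 2 * r * μ₂ / σ ^ 2 with hbdef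
  have hpt : ∀ φ : ℝ, r * g (r * Real.cos φ, r * Real.sin φ)
      = (r * (π * σ ^ 2)⁻¹ * Real.exp (-(r ^ 2 + s ^ 2) / σ ^ 2))
        * Real.exp (a * Real.cos φ + b * Real.sin φ) := by
    intro φ
    have h1 := Real.sin_sq_add_cos_sq φ
    rw [hgdef]
    simp only [gaussianPDFReal, hvc]
    rw [show (2:ℝ) * (σ ^ 2 / 2) = σ ^ 2 by ring]
    have hsqr : Real.sqrt (2 * π * (σ ^ 2 / 2)) * Real.sqrt (2 * π * (σ ^ 2 / 2)) = π * σ ^ 2 := by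
      rw [Real.mul_self_sqrt (by positivity)]; ring
    have key : -(r * Real.cos φ - μ₁) ^ 2 + -(r * Real.sin φ - μ₂) ^ 2
        = -(r ^ 2 + s ^ 2) + (2 * r * μ₁ * Real.cos φ + 2 * r * μ₂ * Real.sin φ) := by
      linear_combination (-(r ^ 2)) * h1 + hsq
    have hexp : -(r * Real.cos φ - μ₁) ^ 2 / σ ^ 2 + -(r * Real.sin φ - μ₂) ^ 2 / σ ^ 2
        = -(r ^ 2 + s ^ 2) / σ ^ 2 + (a * Real.cos φ + b * Real.sin φ) := by
      rw [← add_div, key, hadef, hbdef]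
      ring
    calc r * ((Real.sqrt (2 * π * (σ ^ 2 / 2)))⁻¹ * Real.exp (-(r * Real.cos φ - μ₁) ^ 2 / σ ^ 2)
          * ((Real.sqrt (2 * π * (σ ^ 2 / 2)))⁻¹ * Real.exp (-(r * Real.sin φ - μ₂) ^ 2 / σ ^ 2)))
        = r * (Real.sqrt (2 * π * (σ ^ 2 / 2)) * Real.sqrt (2 * π * (σ ^ 2 / 2)))⁻¹
            * (Real.exp (-(r * Real.cos φ - μ₁) ^ 2 / σ ^ 2)
              * Real.exp (-(r * Real.sin φ - μ₂) ^ 2 / σ ^ 2)) := by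
          rw [mul_inv]; ring
      _ = r * (π * σ ^ 2)⁻¹
            * Real.exp (-(r * Real.cos φ - μ₁) ^ 2 / σ ^ 2
                + -(r * Real.sin φ - μ₂) ^ 2 / σ ^ 2) := by
          rw [hsqr, ← Real.exp_add]
      _ = r * (π * σ ^ 2)⁻¹
            * Real.exp (-(r ^ 2 + s ^ 2) / σ ^ 2 + (a * Real.cos φ + b * Real.sin φ)) := by
          rw [hexp]
      _ = _ := by rw [Real.exp_add]; ring
  simp_rw [hpt]
  rw [MeasureTheory.integral_const_mul, ← integral_Ioc_eq_integral_Ioo,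
    ← intervalIntegral.integral_of_le (by linarith : -π ≤ π), angular_aux a b]
  have hab : Real.sqrt (a ^ 2 + b ^ 2) = 2 * r * s / σ ^ 2 := by
    rw [show a ^ 2 + b ^ 2 = (2 * r * s / σ ^ 2) ^ 2 by
      rw [hadef, hbdef]; field_simp; linear_combination (-(r ^ 2)) * hsq]
    exact Real.sqrt_sq (by positivity)
  rw [hab]
  have hπ0 : (π : ℝ) ≠ 0 := ne_of_gt hπ
  have hσ0 : σ ≠ 0 := ne_of_gt hσ
  field_simp
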